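/- Suppose for each k = 1,…,m, Z_k(i,j) for i,j ≥ 0 is constructed by the recursion Z_k(0,0) = ε_k(0,0); Z_k(i,0) = α_k(i) Z_k(i-1,0) + √(1-α_k(i)²) ε_k(i,0); Z_k(0,j) = β_k(j) Z_k(0,j-1) + √(1-β_k(j)²) ε_k(0,j); and Z_k(i,j) = α_k(i) Z_k(i-1,j) + β_k(j) Z_k(i,j-1) - α_k(i)β_k(j) Z_k(i-1,j-1) + √(1-α_k(i)²)√(1-β_k(j)²) ε_k(i,j), where the ε_k(i,j) are i.i.d. standard normal and α_k(i), β_k(j) ∈ (0,1). Then each Z_k(i,j) is standard normal and Cov(Z_k(i,j), Z_k(i',j')) = ∏_{l=min(i,i')+1}^{max(i,i')} α_k(l) · ∏_{l=min(j,j')+1}^{max(j,j')} β_k(l). -/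

import Mathlib

open MeasureTheory ProbabilityTheory Finset

section AuxGauss
open Real Filter

lemma gauss_conv_pdf (v w : NNReal) (hv : v ≠ 0) (hw : w ≠ 0) (x : ℝ) :
    ∫ y : ℝ, gaussianPDFReal 0 v y * gaussianPDFReal 0 w (x - y) =
      gaussianPDFReal 0 (v + w) x := by
  have hv' : 0 < (v : ℝ) := by positivity
  have hw' : 0 < (w : ℝ) := by positivity
  have hvw : 0 < (v : ℝ) + (w : ℝ) := by linarith
  set b : ℝ := ((v : ℝ) + w) / (2 * v * w) with hb
  have hbpos : 0 < b := by positivity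
  set c : ℝ := (v : ℝ) * x / ((v : ℝ) + w) with hc
  have key : ∀ y : ℝ, gaussianPDFReal 0 v y * gaussianPDFReal 0 w (x - y)
      = gaussianPDFReal 0 (v + w) x * ((√(π / b))⁻¹ * rexp (-b * (y - c) ^ 2)) := by
    intro y
    simp only [gaussianPDFReal, sub_zero, NNReal.coe_add]
    rw [show ((√(2 * π * v))⁻¹ * rexp (-y ^ 2 / (2 * v))) *
        ((√(2 * π * w))⁻¹ * rexp (-(x - y) ^ 2 / (2 * w)))
      = ((√(2 * π * v))⁻¹ * (√(2 * π * w))⁻¹) * rexp (-y ^ 2 / (2 * v) + -(x - y) ^ 2 / (2 * w))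
      from by rw [Real.exp_add]; ring]
    rw [show (-y ^ 2 / (2 * v) + -(x - y) ^ 2 / (2 * w))
        = -x ^ 2 / (2 * ((v : ℝ) + w)) + (-b * (y - c) ^ 2) from by
      rw [hb, hc]; field_simp; ring]
    rw [Real.exp_add]
    have hconst : (√(2 * π * v))⁻¹ * (√(2 * π * w))⁻¹
        = (√(2 * π * ((v : ℝ) + w)))⁻¹ * (√(π / b))⁻¹ := by
      rw [← mul_inv, ← mul_inv, ← Real.sqrt_mul (by positivity), ← Real.sqrt_mul (by positivity)]
      congr 1
      rw [hb]
      field_simp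
    rw [hconst]
    ring
  rw [MeasureTheory.integral_congr_ae (Filter.Eventually.of_forall key),
    MeasureTheory.integral_const_mul, MeasureTheory.integral_const_mul]
  have : ∫ y : ℝ, rexp (-b * (y - c) ^ 2) = √(π / b) := by
    rw [integral_sub_right_eq_self (fun y => rexp (-b * y ^ 2)) c, integral_gaussian]
  rw [this, inv_mul_cancel₀ (by positivity), mul_one]

lemma gaussianPDFReal_le (m : ℝ) (w : NNReal) (x : ℝ) :
    gaussianPDFReal m w x ≤ (√(2 * π * w))⁻¹ := by
  rw [gaussianPDFReal]
  calc (√(2 * π * w))⁻¹ * rexp (-(x - m) ^ 2 / (2 * w)) ≤ (√(2 * π * w))⁻¹ * 1 := by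
        gcongr
        rw [Real.exp_le_one_iff]
        by_cases hw : (w : ℝ) = 0
        · simp [hw]
        · apply div_nonpos_of_nonpos_of_nonneg
          · simpa using sq_nonneg (x - m)
          · positivity
    _ = _ := mul_one _

lemma gauss_map_add (v w : NNReal) (hv : v ≠ 0) (hw : w ≠ 0) :
    Measure.map (fun p : ℝ × ℝ => p.1 + p.2)
      ((gaussianReal 0 v).prod (gaussianReal 0 w)) = gaussianReal 0 (v + w) := by
  have hvw : (v + w : NNReal) ≠ 0 := by simp [hv]
  have hm2 : Measurable (fun p : ℝ × ℝ => gaussianPDF p.1 w p.2) := by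
    unfold gaussianPDF gaussianPDFReal
    fun_prop
  ext s hs
  rw [Measure.map_apply measurable_add hs, Measure.prod_apply (measurable_add hs)]
  have h1 : ∀ x : ℝ, (gaussianReal 0 w) (Prod.mk x ⁻¹' ((fun p : ℝ × ℝ => p.1 + p.2) ⁻¹' s))
      = ∫⁻ y in s, gaussianPDF x w y := by
    intro x
    have : Prod.mk x ⁻¹' ((fun p : ℝ × ℝ => p.1 + p.2) ⁻¹' s) = (fun y => x + y) ⁻¹' s := rfl
    rw [this, ← Measure.map_apply (by fun_prop) hs, gaussianReal_map_const_add, zero_add,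
      gaussianReal_apply _ hw s]
  simp_rw [h1]
  have hmeas_inner : Measurable (fun x : ℝ => ∫⁻ y in s, gaussianPDF x w y) :=
    Measurable.lintegral_prod_right' (f := fun p : ℝ × ℝ => gaussianPDF p.1 w p.2)
      (ν := volume.restrict s) hm2
  rw [gaussianReal_of_var_ne_zero _ hv,
    lintegral_withDensity_eq_lintegral_mul _ (measurable_gaussianPDF 0 v) hmeas_inner]
  simp only [Pi.mul_apply]
  have h2 : ∀ x : ℝ, gaussianPDF 0 v x * ∫⁻ y in s, gaussianPDF x w y
      = ∫⁻ y in s, gaussianPDF 0 v x * gaussianPDF x w y := by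
    intro x
    rw [lintegral_const_mul _ (by fun_prop)]
  simp_rw [h2]
  rw [lintegral_lintegral_swap
    (((measurable_gaussianPDF 0 v).comp measurable_fst).mul hm2).aemeasurable]
  rw [gaussianReal_apply _ hvw s]
  congr 1
  ext y
  have h3 : ∀ x : ℝ, gaussianPDF 0 v x * gaussianPDF x w y
      = ENNReal.ofReal (gaussianPDFReal 0 v x * gaussianPDFReal 0 w (y - x)) := by
    intro x
    rw [gaussianPDF, gaussianPDF, gaussianPDFReal_sub, zero_add,
      ← ENNReal.ofReal_mul (gaussianPDFReal_nonneg _ _ _)]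
  simp_rw [h3]
  have hint : Integrable (fun x : ℝ => gaussianPDFReal 0 v x * gaussianPDFReal 0 w (y - x)) := by
    have h := Integrable.bdd_mul (f := fun x : ℝ => gaussianPDFReal 0 w (y - x))
      (integrable_gaussianPDFReal 0 v)
      (((measurable_gaussianPDFReal 0 w).comp (measurable_const.sub measurable_id)).aestronglyMeasurable)
      (c := (√(2 * π * w))⁻¹) (Filter.Eventually.of_forall fun x => by
        rw [Real.norm_eq_abs, abs_of_nonneg (gaussianPDFReal_nonneg _ _ _)]
        exact gaussianPDFReal_le _ _ _)
    simpa [mul_comm] using h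
  rw [← ofReal_integral_eq_lintegral_ofReal hint
      (Filter.Eventually.of_forall fun x =>
        mul_nonneg (gaussianPDFReal_nonneg _ _ _) (gaussianPDFReal_nonneg _ _ _)),
    gauss_conv_pdf v w hv hw y]
  rfl

lemma ae_eq_zero_of_map_dirac {Ω : Type*} [MeasurableSpace Ω] {μ : Measure Ω}
    [IsProbabilityMeasure μ] {X : Ω → ℝ} (hX : Measurable X)
    (h : Measure.map X μ = Measure.dirac 0) : X =ᵐ[μ] 0 := by
  have h0 : μ (X ⁻¹' {(0 : ℝ)}ᶜ) = 0 := by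
    have := Measure.map_apply (μ := μ) hX (MeasurableSet.compl (measurableSet_singleton (0 : ℝ)))
    rw [h] at this
    rw [← this]
    simp
  filter_upwards [measure_eq_zero_iff_ae_notMem.mp h0] with ω hω
  simpa using hω

lemma indep_add_gauss {Ω : Type*} [MeasurableSpace Ω] {μ : Measure Ω} [IsProbabilityMeasure μ]
    {X Y : Ω → ℝ} (hX : Measurable X) (hY : Measurable Y) (hXY : IndepFun X Y μ)
    {v w : NNReal} (hXl : Measure.map X μ = gaussianReal 0 v)
    (hYl : Measure.map Y μ = gaussianReal 0 w) :
    Measure.map (fun ω => X ω + Y ω) μ = gaussianReal 0 (v + w) := by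
  by_cases hv : v = 0
  · subst hv
    rw [gaussianReal_zero_var] at hXl
    have hX0 := ae_eq_zero_of_map_dirac hX hXl
    have : (fun ω => X ω + Y ω) =ᵐ[μ] Y := by
      filter_upwards [hX0] with ω hω
      simp [hω]
    rw [Measure.map_congr this, hYl, zero_add]
  by_cases hw : w = 0
  · subst hw
    rw [gaussianReal_zero_var] at hYl
    have hY0 := ae_eq_zero_of_map_dirac hY hYl
    have : (fun ω => X ω + Y ω) =ᵐ[μ] X := by
      filter_upwards [hY0] with ω hω
      simp [hω]
    rw [Measure.map_congr this, hXl, add_zero]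
  have hjoint : Measure.map (fun ω => (X ω, Y ω)) μ = (gaussianReal 0 v).prod (gaussianReal 0 w) := by
    rw [← hXl, ← hYl]
    exact (indepFun_iff_map_prod_eq_prod_map_map hX.aemeasurable hY.aemeasurable).mp hXY
  calc Measure.map (fun ω => X ω + Y ω) μ
      = Measure.map ((fun p : ℝ × ℝ => p.1 + p.2) ∘ (fun ω => (X ω, Y ω))) μ := rfl
    _ = Measure.map (fun p : ℝ × ℝ => p.1 + p.2) (Measure.map (fun ω => (X ω, Y ω)) μ) :=
        (Measure.map_map measurable_add (hX.prodMk hY)).symm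
    _ = gaussianReal 0 (v + w) := by rw [hjoint]; exact gauss_map_add v w hv hw

lemma map_finset_sum_gauss {Ω ι : Type*} [MeasurableSpace Ω] [DecidableEq ι] {μ : Measure Ω}
    [IsProbabilityMeasure μ] {X : ι → Ω → ℝ} (hmeas : ∀ q, Measurable (X q))
    (hindep : iIndepFun X μ)
    {v : ι → NNReal} (hlaw : ∀ q, Measure.map (X q) μ = gaussianReal 0 (v q))
    (S : Finset ι) :
    Measure.map (fun ω => ∑ q ∈ S, X q ω) μ = gaussianReal 0 (∑ q ∈ S, v q) := by
  classical
  induction S using Finset.cons_induction with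
  | empty =>
      simp only [Finset.sum_empty]
      rw [show (fun _ : Ω => (0:ℝ)) = fun _ => (0:ℝ) from rfl, Measure.map_const,
        gaussianReal_zero_var]
      simp
  | cons a s ha ih =>
      simp only [Finset.sum_cons]
      have hsum_meas : Measurable (fun ω => ∑ q ∈ s, X q ω) := by
        exact Finset.measurable_sum s fun q _ => hmeas q
      have hindep2 : IndepFun (fun ω => ∑ q ∈ s, X q ω) (X a) μ := by
        have h := hindep.indepFun_finsetSum_of_notMem hmeas ha
        have he : (∑ j ∈ s, X j) = fun ω => ∑ q ∈ s, X q ω := by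
          ext ω; simp [Finset.sum_apply]
        rwa [he] at h
      have := indep_add_gauss (hmeas a) hsum_meas hindep2.symm (hlaw a) ih
      simpa using this

lemma hasDerivAt_negexp (x : ℝ) :
    HasDerivAt (fun x : ℝ => -rexp (-(2⁻¹) * x ^ 2)) (x * rexp (-(2⁻¹) * x ^ 2)) x := by
  have h1 : HasDerivAt (fun x : ℝ => -(2⁻¹ : ℝ) * x ^ 2) (-(2⁻¹ : ℝ) * (2 * x)) x := by
    simpa using ((hasDerivAt_pow 2 x).const_mul (-(2⁻¹ : ℝ)))
  have h2 := (h1.exp).fun_neg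
  exact h2.congr_deriv (by ring)

lemma hasDerivAt_xnegexp (x : ℝ) :
    HasDerivAt (fun x : ℝ => -x * rexp (-(2⁻¹) * x ^ 2))
      (x ^ 2 * rexp (-(2⁻¹) * x ^ 2) - rexp (-(2⁻¹) * x ^ 2)) x := by
  have h1 : HasDerivAt (fun x : ℝ => -(2⁻¹ : ℝ) * x ^ 2) (-(2⁻¹ : ℝ) * (2 * x)) x := by
    simpa using ((hasDerivAt_pow 2 x).const_mul (-(2⁻¹ : ℝ)))
  have h2 := ((hasDerivAt_id' x).fun_neg).fun_mul h1.exp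
  exact h2.congr_deriv (by ring)

lemma tendsto_exp_half_atTop : Tendsto (fun x : ℝ => rexp (-(2⁻¹) * x ^ 2)) atTop (nhds 0) := by
  apply Real.tendsto_exp_atBot.comp
  apply Tendsto.comp (g := fun y : ℝ => -(2⁻¹) * y) (tendsto_id.const_mul_atTop_of_neg (by norm_num))
  exact tendsto_pow_atTop (by norm_num)

lemma tendsto_exp_half_atBot : Tendsto (fun x : ℝ => rexp (-(2⁻¹) * x ^ 2)) atBot (nhds 0) := by
  have h := tendsto_exp_half_atTop.comp tendsto_neg_atBot_atTop
  convert h using 2 with x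
  simp [Function.comp]

lemma tendsto_x_exp_half_atTop : Tendsto (fun x : ℝ => x * rexp (-(2⁻¹) * x ^ 2)) atTop (nhds 0) := by
  have hO : (fun x : ℝ => x * rexp (-(2⁻¹) * x ^ 2)) =O[atTop] fun x => x * rexp (-x) := by
    exact (Asymptotics.isBigO_refl (fun x : ℝ => x) atTop).mul
      ((exp_neg_mul_sq_isLittleO_exp_neg (by norm_num : (0:ℝ) < 2⁻¹)).isBigO)
  refine hO.trans_tendsto ?_
  simpa using Real.tendsto_pow_mul_exp_neg_atTop_nhds_zero 1

lemma tendsto_negx_exp_half_atBot :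
    Tendsto (fun x : ℝ => -x * rexp (-(2⁻¹) * x ^ 2)) atBot (nhds 0) := by
  have h := tendsto_x_exp_half_atTop.comp tendsto_neg_atBot_atTop
  convert h using 2 with x
  simp [Function.comp]

lemma integrable_exp_half : Integrable (fun x : ℝ => rexp (-(2⁻¹) * x ^ 2)) :=
  integrable_exp_neg_mul_sq (by norm_num)

lemma integrable_x_exp_half : Integrable (fun x : ℝ => x * rexp (-(2⁻¹) * x ^ 2)) :=
  integrable_mul_exp_neg_mul_sq (by norm_num)

lemma integrable_sq_exp_half : Integrable (fun x : ℝ => x ^ 2 * rexp (-(2⁻¹) * x ^ 2)) := by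
  have h := integrable_rpow_mul_exp_neg_mul_sq (by norm_num : (0:ℝ) < 2⁻¹)
    (by norm_num : (-1 : ℝ) < 2)
  have : ∀ x : ℝ, x ^ (2 : ℝ) = x ^ 2 := fun x => by
    rw [show ((2:ℝ) = ((2:ℕ):ℝ)) by norm_num, Real.rpow_natCast]
  simpa [this] using h

lemma integral_x_exp_half : ∫ x : ℝ, x * rexp (-(2⁻¹) * x ^ 2) = 0 := by
  have hIic := MeasureTheory.integral_Iic_of_hasDerivAt_of_tendsto
    (f := fun x : ℝ => -rexp (-(2⁻¹) * x ^ 2)) (f' := fun x => x * rexp (-(2⁻¹) * x ^ 2))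
    (a := 0) (m := 0)
    ((by continuity : Continuous fun x : ℝ => -rexp (-(2⁻¹) * x ^ 2)).continuousWithinAt) (fun x _ => hasDerivAt_negexp x) integrable_x_exp_half.integrableOn
    (by simpa using tendsto_exp_half_atBot.neg)
  have hIoi := MeasureTheory.integral_Ioi_of_hasDerivAt_of_tendsto
    (f := fun x : ℝ => -rexp (-(2⁻¹) * x ^ 2)) (f' := fun x => x * rexp (-(2⁻¹) * x ^ 2))
    (a := 0) (m := 0)
    ((by continuity : Continuous fun x : ℝ => -rexp (-(2⁻¹) * x ^ 2)).continuousWithinAt) (fun x _ => hasDerivAt_negexp x) integrable_x_exp_half.integrableOn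
    (by simpa using tendsto_exp_half_atTop.neg)
  rw [← intervalIntegral.integral_Iic_add_Ioi (b := 0) integrable_x_exp_half.integrableOn
    integrable_x_exp_half.integrableOn, hIic, hIoi]
  norm_num

lemma integral_sq_exp_half :
    ∫ x : ℝ, x ^ 2 * rexp (-(2⁻¹) * x ^ 2) = √(2 * π) := by
  have hint : Integrable (fun x : ℝ => x ^ 2 * rexp (-(2⁻¹) * x ^ 2) - rexp (-(2⁻¹) * x ^ 2)) :=
    integrable_sq_exp_half.sub integrable_exp_half
  have hIic := MeasureTheory.integral_Iic_of_hasDerivAt_of_tendsto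
    (f := fun x : ℝ => -x * rexp (-(2⁻¹) * x ^ 2))
    (f' := fun x => x ^ 2 * rexp (-(2⁻¹) * x ^ 2) - rexp (-(2⁻¹) * x ^ 2))
    (a := 0) (m := 0)
    ((by continuity : Continuous fun x : ℝ => -x * rexp (-(2⁻¹) * x ^ 2)).continuousWithinAt) (fun x _ => hasDerivAt_xnegexp x) hint.integrableOn
    tendsto_negx_exp_half_atBot
  have hIoi := MeasureTheory.integral_Ioi_of_hasDerivAt_of_tendsto
    (f := fun x : ℝ => -x * rexp (-(2⁻¹) * x ^ 2))
    (f' := fun x => x ^ 2 * rexp (-(2⁻¹) * x ^ 2) - rexp (-(2⁻¹) * x ^ 2))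
    (a := 0) (m := 0)
    ((by continuity : Continuous fun x : ℝ => -x * rexp (-(2⁻¹) * x ^ 2)).continuousWithinAt) (fun x _ => hasDerivAt_xnegexp x) hint.integrableOn
    (by
      have h := tendsto_x_exp_half_atTop.neg
      simpa [neg_mul] using h)
  have htot : ∫ x : ℝ, (x ^ 2 * rexp (-(2⁻¹) * x ^ 2) - rexp (-(2⁻¹) * x ^ 2)) = 0 := by
    rw [← intervalIntegral.integral_Iic_add_Ioi (b := 0) hint.integrableOn hint.integrableOn,
      hIic, hIoi]
    norm_num
  have := MeasureTheory.integral_sub integrable_sq_exp_half integrable_exp_half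
  rw [this] at htot
  have hg : ∫ x : ℝ, rexp (-(2⁻¹) * x ^ 2) = √(2 * π) := by
    rw [integral_gaussian]
    rw [show π / 2⁻¹ = 2 * π by ring]
  linarith [htot, hg.symm ▸ htot]

lemma pdf1_eq : gaussianPDFReal 0 1 = fun x => (√(2 * π))⁻¹ * rexp (-(2⁻¹) * x ^ 2) := by
  funext x
  rw [gaussianPDFReal]
  push_cast
  rw [show -(x - 0) ^ 2 / (2 * 1) = -(2⁻¹) * x ^ 2 by ring, mul_one]

lemma gauss1_eq : gaussianReal 0 1
    = volume.withDensity (fun x => ((gaussianPDFReal 0 1 x).toNNReal : ENNReal)) := by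
  rw [gaussianReal_of_var_ne_zero 0 one_ne_zero]
  rfl

lemma integral_gauss1 (g : ℝ → ℝ) :
    ∫ x, g x ∂(gaussianReal 0 1) = ∫ x, gaussianPDFReal 0 1 x * g x := by
  rw [gauss1_eq, integral_withDensity_eq_integral_smul
    ((measurable_gaussianPDFReal 0 1).real_toNNReal) g]
  congr 1
  funext x
  simp only [NNReal.smul_def, Real.coe_toNNReal _ (gaussianPDFReal_nonneg 0 1 x), smul_eq_mul]

lemma integrable_gauss1_iff (g : ℝ → ℝ) :
    Integrable g (gaussianReal 0 1) ↔ Integrable (fun x => g x * gaussianPDFReal 0 1 x) := by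
  rw [gaussianReal_of_var_ne_zero 0 one_ne_zero,
    integrable_withDensity_iff (measurable_gaussianPDF 0 1)
      (Filter.Eventually.of_forall fun x => ENNReal.ofReal_lt_top)]
  constructor <;> intro h <;> refine h.congr (Filter.Eventually.of_forall fun x => ?_) <;>
    simp only [gaussianPDF, ENNReal.toReal_ofReal (gaussianPDFReal_nonneg 0 1 x)]

lemma integrable_id_gauss1 : Integrable (fun x : ℝ => x) (gaussianReal 0 1) := by
  rw [integrable_gauss1_iff, pdf1_eq]
  have : (fun x : ℝ => x * ((√(2 * π))⁻¹ * rexp (-(2⁻¹) * x ^ 2)))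
      = fun x => (√(2 * π))⁻¹ * (x * rexp (-(2⁻¹) * x ^ 2)) := by funext x; ring
  rw [this]
  exact integrable_x_exp_half.const_mul _

lemma integrable_sq_gauss1 : Integrable (fun x : ℝ => x ^ 2) (gaussianReal 0 1) := by
  rw [integrable_gauss1_iff, pdf1_eq]
  have : (fun x : ℝ => x ^ 2 * ((√(2 * π))⁻¹ * rexp (-(2⁻¹) * x ^ 2)))
      = fun x => (√(2 * π))⁻¹ * (x ^ 2 * rexp (-(2⁻¹) * x ^ 2)) := by funext x; ring
  rw [this]
  exact integrable_sq_exp_half.const_mul _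

lemma integral_id_gauss1 : ∫ x, x ∂(gaussianReal 0 1) = 0 := by
  rw [integral_gauss1, pdf1_eq]
  have : (fun x : ℝ => ((√(2 * π))⁻¹ * rexp (-(2⁻¹) * x ^ 2)) * x)
      = fun x => (√(2 * π))⁻¹ * (x * rexp (-(2⁻¹) * x ^ 2)) := by funext x; ring
  rw [this, MeasureTheory.integral_const_mul, integral_x_exp_half, mul_zero]

lemma integral_sq_gauss1 : ∫ x, x ^ 2 ∂(gaussianReal 0 1) = 1 := by
  rw [integral_gauss1, pdf1_eq]
  have : (fun x : ℝ => ((√(2 * π))⁻¹ * rexp (-(2⁻¹) * x ^ 2)) * x ^ 2)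
      = fun x => (√(2 * π))⁻¹ * (x ^ 2 * rexp (-(2⁻¹) * x ^ 2)) := by funext x; ring
  rw [this, MeasureTheory.integral_const_mul, integral_sq_exp_half]
  rw [inv_mul_cancel₀ (by positivity)]

variable {Ω ι : Type*} [MeasurableSpace Ω] {μ : Measure Ω} [IsProbabilityMeasure μ]
  {X : ι → Ω → ℝ}

lemma eps_integrable (hmeas : ∀ q, Measurable (X q))
    (hlaw : ∀ q, Measure.map (X q) μ = gaussianReal 0 1) (q : ι) :
    Integrable (X q) μ := by
  have h := integrable_id_gauss1
  rw [← hlaw q] at h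
  exact (integrable_map_measure aestronglyMeasurable_id (hmeas q).aemeasurable).mp h

lemma eps_sq_integrable (hmeas : ∀ q, Measurable (X q))
    (hlaw : ∀ q, Measure.map (X q) μ = gaussianReal 0 1) (q : ι) :
    Integrable (fun ω => X q ω ^ 2) μ := by
  have h := integrable_sq_gauss1
  rw [← hlaw q] at h
  exact (integrable_map_measure (by fun_prop) (hmeas q).aemeasurable).mp h

lemma eps_mean (hmeas : ∀ q, Measurable (X q))
    (hlaw : ∀ q, Measure.map (X q) μ = gaussianReal 0 1) (q : ι) :
    ∫ ω, X q ω ∂μ = 0 := by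
  have h := integral_map (μ := μ) (hmeas q).aemeasurable
    (f := fun x : ℝ => x) aestronglyMeasurable_id
  rw [hlaw q, integral_id_gauss1] at h
  exact h.symm

lemma eps_sq_mean (hmeas : ∀ q, Measurable (X q))
    (hlaw : ∀ q, Measure.map (X q) μ = gaussianReal 0 1) (q : ι) :
    ∫ ω, X q ω ^ 2 ∂μ = 1 := by
  have h := integral_map (μ := μ) (hmeas q).aemeasurable
    (f := fun x : ℝ => x ^ 2) (by fun_prop)
  rw [hlaw q, integral_sq_gauss1] at h
  exact h.symm

lemma eps_mul_integrable (hmeas : ∀ q, Measurable (X q))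
    (hindep : iIndepFun X μ)
    (hlaw : ∀ q, Measure.map (X q) μ = gaussianReal 0 1) (q r : ι) :
    Integrable (fun ω => X q ω * X r ω) μ := by
  by_cases hqr : q = r
  · subst hqr
    have h := eps_sq_integrable hmeas hlaw q
    exact h.congr (Filter.Eventually.of_forall fun ω => by simp [sq])
  · exact (hindep.indepFun hqr).integrable_mul (eps_integrable hmeas hlaw q)
      (eps_integrable hmeas hlaw r)

lemma eps_mul_int (hmeas : ∀ q, Measurable (X q))
    (hindep : iIndepFun X μ)
    (hlaw : ∀ q, Measure.map (X q) μ = gaussianReal 0 1) (q r : ι) [Decidable (q = r)] :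
    ∫ ω, X q ω * X r ω ∂μ = if q = r then 1 else 0 := by
  by_cases hqr : q = r
  · subst hqr
    simp only [if_pos rfl]
    have h := eps_sq_mean hmeas hlaw q
    rw [← h]
    congr 1
    funext ω
    rw [sq]
  · rw [if_neg hqr]
    have h := (hindep.indepFun hqr).integral_fun_mul_eq_mul_integral
      (eps_integrable hmeas hlaw q).aestronglyMeasurable (eps_integrable hmeas hlaw r).aestronglyMeasurable
    rw [eps_mean hmeas hlaw q, eps_mean hmeas hlaw r, mul_zero] at h
    exact h

lemma cov_sum [DecidableEq ι] (hmeas : ∀ q, Measurable (X q))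
    (hindep : iIndepFun X μ)
    (hlaw : ∀ q, Measure.map (X q) μ = gaussianReal 0 1) (c d : ι → ℝ) (S : Finset ι) :
    ∫ ω, (∑ u ∈ S, c u * X u ω) * (∑ v ∈ S, d v * X v ω) ∂μ = ∑ u ∈ S, c u * d u := by
  have h1 : ∀ ω, (∑ u ∈ S, c u * X u ω) * (∑ v ∈ S, d v * X v ω)
      = ∑ u ∈ S, ∑ v ∈ S, (c u * d v) * (X u ω * X v ω) := by
    intro ω
    rw [Finset.sum_mul_sum]
    exact Finset.sum_congr rfl fun u _ => Finset.sum_congr rfl fun v _ => by ring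
  simp_rw [h1]
  rw [integral_finset_sum _ (fun u _ => integrable_finset_sum _
    (fun v _ => ((eps_mul_integrable hmeas hindep hlaw u v).const_mul _)))]
  have h2 : ∀ u ∈ S, ∫ ω, ∑ v ∈ S, (c u * d v) * (X u ω * X v ω) ∂μ = c u * d u := by
    intro u hu
    rw [integral_finset_sum _ (fun v _ => (eps_mul_integrable hmeas hindep hlaw u v).const_mul _)]
    have h3 : ∀ v ∈ S, ∫ ω, (c u * d v) * (X u ω * X v ω) ∂μ
        = if u = v then c u * d v else 0 := by
      intro v _
      rw [MeasureTheory.integral_const_mul, eps_mul_int hmeas hindep hlaw u v]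
      split <;> simp
    rw [Finset.sum_congr rfl h3, Finset.sum_ite_eq S u (fun v => c u * d v), if_pos hu]
  exact Finset.sum_congr rfl h2


end AuxGauss

section AuxGauss2
open Real Filter

lemma map_combo {Ω ι : Type*} [MeasurableSpace Ω] [DecidableEq ι] {μ : Measure Ω}
    [IsProbabilityMeasure μ] {X : ι → Ω → ℝ} (hmeas : ∀ q, Measurable (X q))
    (hindep : iIndepFun X μ)
    (hlaw : ∀ q, Measure.map (X q) μ = gaussianReal 0 1) (c : ι → ℝ) (S : Finset ι) :
    Measure.map (fun ω => ∑ u ∈ S, c u * X u ω) μ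
      = gaussianReal 0 (∑ u ∈ S, (⟨c u ^ 2, sq_nonneg _⟩ : NNReal)) := by
  set Y : ι → Ω → ℝ := fun u ω => c u * X u ω with hY
  have hYmeas : ∀ u, Measurable (Y u) := fun u => (hmeas u).const_mul _
  have hYindep : iIndepFun Y μ :=
    hindep.comp (fun u x => c u * x) (fun u => measurable_id.const_mul _)
  have hYlaw : ∀ u, Measure.map (Y u) μ = gaussianReal 0 ⟨c u ^ 2, sq_nonneg _⟩ := by
    intro u
    have h : Measure.map (Y u) μ = Measure.map ((c u * ·) ∘ X u) μ := rfl
    rw [h, ← Measure.map_map (measurable_const_mul (c u)) (hmeas u), hlaw u,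
      gaussianReal_map_const_mul]
    simp
    rfl
  exact map_finset_sum_gauss hYmeas hYindep hYlaw S

noncomputable def ARcoef (α : ℕ → ℝ) (i p : ℕ) : ℝ :=
  if p ≤ i then (∏ l ∈ Finset.Ioc p i, α l) * (if p = 0 then 1 else Real.sqrt (1 - α p ^ 2))
  else 0

lemma ARcoef_zero_zero (α : ℕ → ℝ) : ARcoef α 0 0 = 1 := by simp [ARcoef]

lemma ARcoef_succ_self (α : ℕ → ℝ) (i : ℕ) :
    ARcoef α (i + 1) (i + 1) = Real.sqrt (1 - α (i + 1) ^ 2) := by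
  simp [ARcoef]

lemma ARcoef_succ_of_le (α : ℕ → ℝ) {p i : ℕ} (h : p ≤ i) :
    ARcoef α (i + 1) p = α (i + 1) * ARcoef α i p := by
  rw [ARcoef, ARcoef, if_pos h, if_pos (h.trans (Nat.le_succ i)),
    Finset.prod_Ioc_succ_top h]
  ring

lemma ARcoef_eq_zero (α : ℕ → ℝ) {p i : ℕ} (h : i < p) : ARcoef α i p = 0 := by
  rw [ARcoef, if_neg (by omega)]

lemma ARcoef_sum_succ (α : ℕ → ℝ) (i : ℕ) (f : ℕ → ℝ) :
    ∑ p ∈ range (i + 2), ARcoef α (i + 1) p * f p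
      = α (i + 1) * ∑ p ∈ range (i + 1), ARcoef α i p * f p
        + Real.sqrt (1 - α (i + 1) ^ 2) * f (i + 1) := by
  rw [Finset.sum_range_succ, ARcoef_succ_self, Finset.mul_sum]
  congr 1
  exact Finset.sum_congr rfl fun p hp => by
    rw [ARcoef_succ_of_le α (Nat.lt_succ_iff.mp (Finset.mem_range.mp hp))]; ring

lemma ARcoef_sum_sq (α : ℕ → ℝ) (hα : ∀ l, α l ∈ Set.Ioo (0:ℝ) 1) (i : ℕ) :
    ∑ p ∈ range (i + 1), ARcoef α i p ^ 2 = 1 := by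
  induction i with
  | zero => simp [ARcoef_zero_zero]
  | succ i ih =>
      rw [Finset.sum_range_succ, ARcoef_succ_self]
      have h1 : ∑ p ∈ range (i + 1), ARcoef α (i + 1) p ^ 2
          = α (i + 1) ^ 2 * ∑ p ∈ range (i + 1), ARcoef α i p ^ 2 := by
        rw [Finset.mul_sum]
        exact Finset.sum_congr rfl fun p hp => by
          rw [ARcoef_succ_of_le α (Nat.lt_succ_iff.mp (Finset.mem_range.mp hp))]; ring
      rw [h1, ih, Real.sq_sqrt]
      · ring
      · have h := hα (i + 1)
        nlinarith [h.1, h.2]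

lemma ARcoef_cross_le (α : ℕ → ℝ) (hα : ∀ l, α l ∈ Set.Ioo (0:ℝ) 1) {i i' : ℕ} (h : i ≤ i') :
    ∑ p ∈ range (i + 1), ARcoef α i p * ARcoef α i' p = ∏ l ∈ Finset.Ioc i i', α l := by
  have key : ∀ p, p ≤ i → ARcoef α i' p = (∏ l ∈ Finset.Ioc i i', α l) * ARcoef α i p := by
    intro p hp
    rw [ARcoef, ARcoef, if_pos hp, if_pos (hp.trans h),
      ← Finset.prod_Ioc_consecutive α hp h]
    ring
  calc ∑ p ∈ range (i + 1), ARcoef α i p * ARcoef α i' p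
      = ∑ p ∈ range (i + 1), (∏ l ∈ Finset.Ioc i i', α l) * ARcoef α i p ^ 2 := by
        exact Finset.sum_congr rfl fun p hp => by
          rw [key p (Nat.lt_succ_iff.mp (Finset.mem_range.mp hp))]; ring
    _ = (∏ l ∈ Finset.Ioc i i', α l) * ∑ p ∈ range (i + 1), ARcoef α i p ^ 2 := by
        rw [Finset.mul_sum]
    _ = _ := by rw [ARcoef_sum_sq α hα, mul_one]

lemma ARcoef_cross (α : ℕ → ℝ) (hα : ∀ l, α l ∈ Set.Ioo (0:ℝ) 1) (i i' N : ℕ)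
    (hN : max i i' ≤ N) :
    ∑ p ∈ range (N + 1), ARcoef α i p * ARcoef α i' p
      = ∏ l ∈ Finset.Ioc (min i i') (max i i'), α l := by
  rcases le_total i i' with h | h
  · rw [min_eq_left h, max_eq_right h]
    rw [← ARcoef_cross_le α hα h]
    symm
    apply Finset.sum_subset
    · exact Finset.range_subset_range.mpr (by omega)
    · intro p _ hp
      rw [ARcoef_eq_zero α (show i < p by
        have := Finset.mem_range.not.mp hp; omega)]
      ring
  · rw [min_eq_right h, max_eq_left h]
    rw [← ARcoef_cross_le α hα h]
    have hc : ∀ p, ARcoef α i p * ARcoef α i' p = ARcoef α i' p * ARcoef α i p :=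
      fun p => mul_comm _ _
    simp_rw [hc]
    symm
    apply Finset.sum_subset
    · exact Finset.range_subset_range.mpr (by omega)
    · intro p _ hp
      rw [ARcoef_eq_zero α (show i' < p by
        have := Finset.mem_range.not.mp hp; omega)]
      ring

end AuxGauss2

/-- Spatial autoregressive construction: with i.i.d. standard normal
innovations `ε(i,j)` and coefficients `α(i), β(j) ∈ (0,1)`, the recursively
defined field `Z(i,j)` is standard normal with the direct-product covariance
`Cov(Z(i,j), Z(i',j')) = ∏_{min(i,i')<l≤max(i,i')} α(l) ·
∏_{min(j,j')<l≤max(j,j')} β(l)`. -/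
theorem spatial_AR_standard_normal_product_cov {Ω : Type*} [MeasurableSpace Ω]
    (μ : Measure Ω) [IsProbabilityMeasure μ]
    (ε : ℕ × ℕ → Ω → ℝ) (hεmeas : ∀ q, Measurable (ε q))
    (hεlaw : ∀ q, Measure.map (ε q) μ = gaussianReal 0 1)
    (hεindep : iIndepFun ε μ)
    (α β : ℕ → ℝ) (hα : ∀ i, α i ∈ Set.Ioo (0 : ℝ) 1)
    (hβ : ∀ j, β j ∈ Set.Ioo (0 : ℝ) 1)
    (Z : ℕ → ℕ → Ω → ℝ)
    (hZ00 : Z 0 0 = ε (0, 0))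
    (hZi0 : ∀ i, Z (i + 1) 0 = fun ω =>
      α (i + 1) * Z i 0 ω + Real.sqrt (1 - α (i + 1) ^ 2) * ε (i + 1, 0) ω)
    (hZ0j : ∀ j, Z 0 (j + 1) = fun ω =>
      β (j + 1) * Z 0 j ω + Real.sqrt (1 - β (j + 1) ^ 2) * ε (0, j + 1) ω)
    (hZij : ∀ i j, Z (i + 1) (j + 1) = fun ω =>
      α (i + 1) * Z i (j + 1) ω + β (j + 1) * Z (i + 1) j ω
        - α (i + 1) * β (j + 1) * Z i j ω
        + Real.sqrt (1 - α (i + 1) ^ 2) * Real.sqrt (1 - β (j + 1) ^ 2) *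
            ε (i + 1, j + 1) ω) :
    (∀ i j, Measure.map (Z i j) μ = gaussianReal 0 1) ∧
    (∀ i j i' j', ∫ ω, Z i j ω * Z i' j' ω ∂μ =
      (∏ l ∈ Finset.Ioc (min i i') (max i i'), α l) *
      (∏ l ∈ Finset.Ioc (min j j') (max j j'), β l)) := by
  -- the fundamental representation of `Z i j` as a linear combination of the `ε`s
  have hrep : ∀ i j ω, Z i j ω = ∑ p ∈ range (i + 1), ARcoef α i p *
      ∑ q ∈ range (j + 1), ARcoef β j q * ε (p, q) ω := by
    intro i
    induction i with
    | zero =>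
        intro j
        induction j with
        | zero =>
            intro ω
            simp [hZ00, ARcoef_zero_zero]
        | succ j ihj =>
            intro ω
            rw [hZ0j j]
            simp only
            rw [Finset.sum_range_one, ARcoef_zero_zero, one_mul,
              ARcoef_sum_succ β j (fun q => ε (0, q) ω), ihj ω, Finset.sum_range_one,
              ARcoef_zero_zero, one_mul]
    | succ i ihi =>
        intro j
        induction j with
        | zero =>
            intro ω
            rw [hZi0 i]
            simp only
            rw [ARcoef_sum_succ α i (fun p => ∑ q ∈ range (0 + 1), ARcoef β 0 q * ε (p, q) ω),
              ihi 0 ω]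
            simp [ARcoef_zero_zero]
        | succ j ihj =>
            intro ω
            rw [hZij i j]
            simp only
            rw [ARcoef_sum_succ α i
              (fun p => ∑ q ∈ range (j + 2), ARcoef β (j + 1) q * ε (p, q) ω),
              ARcoef_sum_succ β j (fun q => ε (i + 1, q) ω)]
            have h1 : Z i (j + 1) ω = ∑ p ∈ range (i + 1), ARcoef α i p *
                ∑ q ∈ range (j + 2), ARcoef β (j + 1) q * ε (p, q) ω := ihi (j + 1) ω
            have h2 : Z (i + 1) j ω = α (i + 1) * Z i j ω +
                Real.sqrt (1 - α (i + 1) ^ 2) *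
                  ∑ q ∈ range (j + 1), ARcoef β j q * ε (i + 1, q) ω := by
              rw [ihj ω, ARcoef_sum_succ α i
                (fun p => ∑ q ∈ range (j + 1), ARcoef β j q * ε (p, q) ω), ihi j ω]
            rw [← h1]
            linear_combination β (j + 1) * h2
  -- representation over an arbitrary large rectangle
  have hrepS : ∀ i j I J, i ≤ I → j ≤ J → Z i j = fun ω =>
      ∑ u ∈ range (I + 1) ×ˢ range (J + 1),
        (ARcoef α i u.1 * ARcoef β j u.2) * ε u ω := by
    intro i j I J hI hJ
    funext ω
    rw [hrep i j ω]
    have hsmall : ∑ p ∈ range (i + 1), ARcoef α i p *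
        ∑ q ∈ range (j + 1), ARcoef β j q * ε (p, q) ω
        = ∑ u ∈ range (i + 1) ×ˢ range (j + 1),
          (ARcoef α i u.1 * ARcoef β j u.2) * ε u ω := by
      rw [Finset.sum_product]
      exact Finset.sum_congr rfl fun p _ => by
        rw [Finset.mul_sum]
        exact Finset.sum_congr rfl fun q _ => by ring
    rw [hsmall]
    apply Finset.sum_subset
    · exact Finset.product_subset_product
        (Finset.range_subset_range.mpr (by omega)) (Finset.range_subset_range.mpr (by omega))
    · intro u hu hunot
      rw [Finset.mem_product] at hu
      rw [Finset.mem_product, not_and_or] at hunot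
      rcases hunot with h | h
      · rw [ARcoef_eq_zero α (show i < u.1 by
          have := Finset.mem_range.not.mp h; omega)]
        ring
      · rw [ARcoef_eq_zero β (show j < u.2 by
          have := Finset.mem_range.not.mp h; omega)]
        ring
  constructor
  · -- laws
    intro i j
    rw [hrepS i j i j le_rfl le_rfl]
    rw [map_combo hεmeas hεindep hεlaw
      (fun u => ARcoef α i u.1 * ARcoef β j u.2) (range (i + 1) ×ˢ range (j + 1))]
    congr 1
    apply NNReal.coe_injective
    erw [NNReal.coe_sum]
    change ∑ u ∈ range (i + 1) ×ˢ range (j + 1), (ARcoef α i u.1 * ARcoef β j u.2) ^ 2 = (1 : ℝ)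
    push_cast
    rw [Finset.sum_product]
    simp_rw [mul_pow]
    rw [← Finset.sum_mul_sum, ARcoef_sum_sq α hα, ARcoef_sum_sq β hβ]
    norm_num
  · -- covariances
    intro i j i' j'
    rw [hrepS i j (max i i') (max j j') (le_max_left _ _) (le_max_left _ _),
      hrepS i' j' (max i i') (max j j') (le_max_right _ _) (le_max_right _ _)]
    simp only
    rw [cov_sum hεmeas hεindep hεlaw
      (fun u => ARcoef α i u.1 * ARcoef β j u.2)
      (fun u => ARcoef α i' u.1 * ARcoef β j' u.2)
      (range (max i i' + 1) ×ˢ range (max j j' + 1))]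
    rw [Finset.sum_product]
    have hterm : ∀ p q, (ARcoef α i p * ARcoef β j q) * (ARcoef α i' p * ARcoef β j' q)
        = (ARcoef α i p * ARcoef α i' p) * (ARcoef β j q * ARcoef β j' q) := by
      intro p q; ring
    simp_rw [hterm]
    rw [← Finset.sum_mul_sum, ARcoef_cross α hα i i' (max i i') le_rfl,
      ARcoef_cross β hβ j j' (max j j') le_rfl]
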